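/- Let G be a graph and H = G[V(G) - N[core(G)]]. Then core(H) = ∅. -/
import Mathlib


open Finset

variable {V : Type*} [Fintype V] [DecidableEq V]

/-  A set of vertices is stable (independent) if no two of its vertices are adjacent. -/
def stable (G : SimpleGraph V) (S : Finset V) : Prop :=
  ∀ a ∈ S, ∀ b ∈ S, ¬ G.Adj a b

/-  The (open) neighborhood of a set of vertices. -/
open Classical in
noncomputable def nbhd (G : SimpleGraph V) (A : Finset V) : Finset V :=
  Finset.univ.filter fun v => ∃ a ∈ A, G.Adj a v

/-  The stability number: maximum size of a stable set. -/
open Classical in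
noncomputable def alpha (G : SimpleGraph V) : ℕ :=
  Finset.univ.sup fun S : Finset V => if stable G S then S.card else 0

/-  A maximum stable set. -/
def maxStable (G : SimpleGraph V) (S : Finset V) : Prop :=
  stable G S ∧ S.card = alpha G

/-  core(G): the intersection of all maximum stable sets. -/
open Classical in
noncomputable def core (G : SimpleGraph V) : Finset V :=
  Finset.univ.filter fun v => ∀ S : Finset V, maxStable G S → v ∈ S

/-  A vertex is isolated if it has no neighbors. -/
def isolated (G : SimpleGraph V) (v : V) : Prop := ∀ w, ¬ G.Adj v w

/-  The set of isolated vertices. -/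
open Classical in
noncomputable def isol (G : SimpleGraph V) : Finset V :=
  Finset.univ.filter fun v => isolated G v

section Aux

lemma my_stable_empty (G : SimpleGraph V) : stable G (∅ : Finset V) := by
  intro a ha; simp at ha

lemma my_stable_card_le (G : SimpleGraph V) {S : Finset V} (h : stable G S) :
    S.card ≤ alpha G := by
  classical
  rw [alpha]
  have h2 := Finset.le_sup (f := fun S : Finset V => if stable G S then S.card else 0)
    (b := S) (Finset.mem_univ S)
  simp only [if_pos h] at h2
  exact h2

lemma my_exists_maxStable (G : SimpleGraph V) : ∃ S, maxStable G S := by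
  classical
  obtain ⟨S, -, hS⟩ := Finset.exists_mem_eq_sup (Finset.univ : Finset (Finset V))
    ⟨∅, Finset.mem_univ _⟩ (fun S : Finset V => if stable G S then S.card else 0)
  have halpha : alpha G = if stable G S then S.card else 0 := by
    rw [alpha, hS]
  by_cases h : stable G S
  · exact ⟨S, h, by rw [halpha, if_pos h]⟩
  · refine ⟨∅, my_stable_empty G, ?_⟩
    rw [halpha, if_neg h]; simp

lemma my_core_subset (G : SimpleGraph V) {S : Finset V} (h : maxStable G S) :
    core G ⊆ S := by
  intro v hv
  classical
  rw [core, Finset.mem_filter] at hv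
  exact hv.2 S h

lemma my_stable_subset (G : SimpleGraph V) {S T : Finset V} (h : stable G S)
    (hts : T ⊆ S) : stable G T :=
  fun a ha b hb => h a (hts ha) b (hts hb)

lemma my_stable_core (G : SimpleGraph V) : stable G (core G) := by
  obtain ⟨S, hS⟩ := my_exists_maxStable G
  exact my_stable_subset G hS.1 (my_core_subset G hS)

lemma my_mem_nbhd (G : SimpleGraph V) (A : Finset V) (v : V) :
    v ∈ nbhd G A ↔ ∃ a ∈ A, G.Adj a v := by
  rw [nbhd]; simp

end Aux

/-  For H = G[V(G) - N[core(G)]], core(H) = ∅. -/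
theorem stmt13 (G : SimpleGraph V) :
    core (SimpleGraph.comap
      (Subtype.val : {x : V // x ∉ core G ∪ nbhd G (core G)} → V) G) = ∅ := by
  classical
  set c := core G with hc
  set p : V → Prop := fun x => x ∉ c ∪ nbhd G c with hp
  set H := SimpleGraph.comap (Subtype.val : {x : V // p x} → V) G with hH
  -- For each maximum stable set S of G, the restriction to the subtype
  have key : ∀ S : Finset V, maxStable G S →
      maxStable H (S.subtype p) ∧ (S.subtype p).card + c.card = S.card := by
    intro S hS
    have hcS : c ⊆ S := my_core_subset G hS
    have hfilter : S.filter p = S \ c := by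
      ext x
      simp only [Finset.mem_filter, Finset.mem_sdiff]
      constructor
      · rintro ⟨hxS, hxp⟩
        refine ⟨hxS, fun hxc => hxp ?_⟩
        exact Finset.mem_union_left _ hxc
      · rintro ⟨hxS, hxc⟩
        refine ⟨hxS, fun hmem => ?_⟩
        rcases Finset.mem_union.1 hmem with h | h
        · exact hxc h
        · obtain ⟨a, ha, hadj⟩ := (my_mem_nbhd G c x).1 h
          exact hS.1 a (hcS ha) x hxS hadj
    have hcard : (S.subtype p).card + c.card = S.card := by
      rw [Finset.card_subtype, hfilter, Finset.card_sdiff_of_subset hcS]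
      exact Nat.sub_add_cancel (Finset.card_le_card hcS)
    have hstab : stable H (S.subtype p) := by
      intro a ha b hb hadj
      rw [Finset.mem_subtype] at ha hb
      exact hS.1 a.val ha b.val hb hadj
    refine ⟨⟨hstab, ?_⟩, hcard⟩
    -- card = alpha H
    have hle : (S.subtype p).card ≤ alpha H := my_stable_card_le H hstab
    -- upper bound for alpha H
    obtain ⟨T, hT⟩ := my_exists_maxStable H
    have hTimg : stable G (T.map (Function.Embedding.subtype p) ∪ c) := by
      intro a ha b hb hadj
      have hmem : ∀ x, x ∈ T.map (Function.Embedding.subtype p) ∪ c →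
          (∃ t ∈ T, (t : V) = x) ∨ x ∈ c := by
        intro x hx
        rcases Finset.mem_union.1 hx with h | h
        · obtain ⟨t, ht, ht'⟩ := Finset.mem_map.1 h
          simp only [Function.Embedding.coe_subtype] at ht'
          exact Or.inl ⟨t, ht, ht'⟩
        · right; exact h
      rcases hmem a ha with ⟨ta, hta, hta'⟩ | hac
      · rcases hmem b hb with ⟨tb, htb, htb'⟩ | hbc
        · subst hta'; subst htb'
          exact hT.1 ta hta tb htb hadj
        · -- a in subtype, b in core: then a ∈ nbhd c, contradiction
          subst hta'
          have : (ta : V) ∈ nbhd G c := (my_mem_nbhd G c _).2 ⟨b, hbc, hadj.symm⟩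
          exact ta.property (Finset.mem_union_right _ this)
      · rcases hmem b hb with ⟨tb, htb, htb'⟩ | hbc
        · subst htb'
          have : (tb : V) ∈ nbhd G c := (my_mem_nbhd G c _).2 ⟨a, hac, hadj⟩
          exact tb.property (Finset.mem_union_right _ this)
        · exact my_stable_core G a hac b hbc hadj
    have hdisj : Disjoint (T.map (Function.Embedding.subtype p)) c := by
      rw [Finset.disjoint_left]
      intro x hx hxc
      obtain ⟨t, _, ht⟩ := Finset.mem_map.1 hx
      have := t.property
      simp only [Function.Embedding.coe_subtype] at ht
      rw [ht] at this
      exact this (Finset.mem_union_left _ hxc)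
    have hub : alpha H + c.card ≤ alpha G := by
      have := my_stable_card_le G hTimg
      rwa [Finset.card_union_of_disjoint hdisj, Finset.card_map, hT.2] at this
    have hlbeq : alpha G ≤ (S.subtype p).card + c.card := by
      rw [hcard, hS.2]
    omega
  -- now show core H = ∅
  rw [Finset.eq_empty_iff_forall_notMem]
  intro v hv
  rw [core, Finset.mem_filter] at hv
  have hvcore : v.val ∈ c := by
    show (v : V) ∈ core G
    rw [core, Finset.mem_filter]
    refine ⟨Finset.mem_univ _, fun S hS => ?_⟩
    have h1 := hv.2 (S.subtype p) (key S hS).1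
    rw [Finset.mem_subtype] at h1
    exact h1
  exact v.property (Finset.mem_union_left _ hvcore)
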